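/- (Lemma 3.1, flow/Thomson form) For every r ≥ 1 and every unit flow θ from the origin O to the set ∂_r on Wedge(f_1,…,f_d), the energy satisfies E(θ) ≥ (1/(2(d+1)²)) · ∑_{n=0}^{r−1} ∏_{i=1}^d 1/(h_i(n) + 1). -/

import Mathlib

open scoped ENNReal BigOperators

namespace WedgePaper

/-- A point of `ℤ^{d+1}`, written as (x₁,…,x_d, x_{d+1}). -/
abbrev Pt (d : ℕ) := (Fin d → ℤ) × ℤ

/-- The vertex set `V` of `Wedge(f₁,…,f_d)`:
points `(x₁,…,x_d,n) ∈ ℤ^{d+1}` with `n ≥ 0` and `0 ≤ xᵢ ≤ fᵢ(n)`. -/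
def V (d : ℕ) (f : Fin d → ℕ → ℝ≥0∞) : Set (Pt d) :=
  {x | 0 ≤ x.2 ∧ ∀ i, 0 ≤ x.1 i ∧ ((x.1 i).toNat : ℝ≥0∞) ≤ f i x.2.toNat}

/-- The ℓ¹ distance on `ℤ^{d+1}`. -/
def dist1 (d : ℕ) (x y : Pt d) : ℤ :=
  (∑ i : Fin d, |x.1 i - y.1 i|) + |x.2 - y.2|

/-- The edge relation of `Wedge(f₁,…,f_d)`. -/
def Edge (d : ℕ) (f : Fin d → ℕ → ℝ≥0∞) (x y : Pt d) : Prop :=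
  x ∈ V d f ∧ y ∈ V d f ∧ dist1 d x y = 1

/-- `pfun d h x i = pᵢ(x) = min{m : hᵢ(m) ≥ xᵢ}`. -/
noncomputable def pfun (d : ℕ) (h : Fin d → ℕ → ℕ) (x : Pt d) (i : Fin d) : ℕ :=
  sInf {m : ℕ | x.1 i ≤ (h i m : ℤ)}

/-- `ufun d h x = u(x) = max{x_{d+1}, p₁(x),…,p_d(x)}`. -/
noncomputable def ufun (d : ℕ) (h : Fin d → ℕ → ℕ) (x : Pt d) : ℕ :=
  max x.2.toNat (Finset.univ.sup (pfun d h x))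

/-- `Δ_{d+1}(n)`. -/
def DeltaTop (d : ℕ) (h : Fin d → ℕ → ℕ) : ℕ → Set (Pt d)
  | 0 => {0}
  | (n+1) => {x | x.2 = ((n : ℤ) + 1) ∧ ∀ i, 0 ≤ x.1 i ∧ x.1 i ≤ (h i (n+1) : ℤ)}

/-- `Δᵢ(n)` for `1 ≤ i ≤ d` (empty when `hᵢ(n) = hᵢ(n-1)`). -/
def DeltaSide (d : ℕ) (f : Fin d → ℕ → ℝ≥0∞) (h : Fin d → ℕ → ℕ) (i : Fin d) :
    ℕ → Set (Pt d)
  | 0 => {0}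
  | (n+1) => {x | h i (n+1) = h i n + 1 ∧ x ∈ V d f ∧
      (∀ j, x.1 j ≤ (h j (n+1) : ℤ)) ∧ x.1 i = (h i (n+1) : ℤ) ∧ x.2 ≤ (n : ℤ) + 1}

/-- `∂_n = ⋃_{i=1}^{d+1} Δᵢ(n)`. -/
def bdry (d : ℕ) (f : Fin d → ℕ → ℝ≥0∞) (h : Fin d → ℕ → ℕ) (n : ℕ) : Set (Pt d) :=
  DeltaTop d h n ∪ ⋃ i, DeltaSide d f h i n

/-- `x + eᵢ`, where `eᵢ` is the i-th standard unit vector of `ℤ^{d+1}`. -/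
def addE (d : ℕ) (x : Pt d) (i : Fin (d+1)) : Pt d :=
  if hi : (i : ℕ) < d then (Function.update x.1 ⟨i, hi⟩ (x.1 ⟨i, hi⟩ + 1), x.2)
  else (x.1, x.2 + 1)

/-- A flow on `Wedge(f₁,…,f_d)`: an antisymmetric function vanishing off edges. -/
def IsFlow (d : ℕ) (f : Fin d → ℕ → ℝ≥0∞) (θ : Pt d → Pt d → ℝ) : Prop :=
  (∀ v w, θ v w = - θ w v) ∧ ∀ v w, ¬ Edge d f v w → θ v w = 0

/-- Divergence of `θ` at `v`: `∑_w θ(v,w)`. -/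
noncomputable def divg (d : ℕ) (θ : Pt d → Pt d → ℝ) (v : Pt d) : ℝ := ∑' w, θ v w

/-- Energy of a flow: `(1/2) ∑_{v,w} θ(v,w)²`. -/
noncomputable def energy (d : ℕ) (θ : Pt d → Pt d → ℝ) : ℝ≥0∞ :=
  (1/2 : ℝ≥0∞) * ∑' q : Pt d × Pt d, ENNReal.ofReal (θ q.1 q.2 ^ 2)

/-- A unit flow from the vertex `a` to the set `B`. -/
def IsUnitFlow (d : ℕ) (f : Fin d → ℕ → ℝ≥0∞) (a : Pt d) (B : Set (Pt d))
    (θ : Pt d → Pt d → ℝ) : Prop :=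
  IsFlow d f θ ∧ divg d θ a = 1 ∧ ∀ v, v ∉ B ∪ {a} → divg d θ v = 0

/-- The set `V_x` built from the functions `g_{±i}` (here `gp i = g_i`, `gm i = g_{-i}`). -/
def Vx (d : ℕ) (gp gm : Fin d → ℕ → ℤ) (r s : ℕ) : Set (Pt d) :=
  {y | ∃ n : ℕ, n ≤ r - s ∧ y.2 = (n : ℤ) + (s : ℤ) ∧
    ∀ i, gm i n ≤ y.1 i ∧ y.1 i ≤ gp i n}

/-- `Lᵢ(n) = min{g_{εi}(n) : g_{εi}(n) = g_{εi}(n-1), ε ∈ {-1,1}}` (for `n ≥ 1`). -/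
def Lfun (d : ℕ) (gp gm : Fin d → ℕ → ℤ) (i : Fin d) (n : ℕ) : ℤ :=
  if gm i n = gm i (n-1) then gm i n else gp i n

/-- The map `Γ`. -/
def Gam (d : ℕ) (gp gm : Fin d → ℕ → ℤ) (s : ℕ) (y : Pt d) : Pt d :=
  if y.2 = (s : ℤ) then 0
  else (fun i => |y.1 i - Lfun d gp gm i (y.2 - (s : ℤ)).toNat|, y.2 - (s : ℤ))

/-- The set `H`, a piece of `Wedge(h₁,…,h_d)`. -/
def Hset (d : ℕ) (h : Fin d → ℕ → ℕ) (r s : ℕ) : Set (Pt d) :=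
  {y | ∃ n : ℕ, n ≤ r - s ∧ y.2 = (n : ℤ) ∧ ∀ i, 0 ≤ y.1 i ∧ y.1 i ≤ (h i n : ℤ)}

/-- Neighbours of a point in the `ℤ^{d+1}` lattice. -/
def nbrs {d : ℕ} (v : Pt d) : Finset (Pt d) :=
  ({(v.1, v.2 + 1), (v.1, v.2 - 1)} : Finset (Pt d)) ∪
    (Finset.univ.image fun i : Fin d => (Function.update v.1 i (v.1 i + 1), v.2)) ∪
    (Finset.univ.image fun i : Fin d => (Function.update v.1 i (v.1 i - 1), v.2))

lemma shape_of_dist1 {d : ℕ} {v w : Pt d} (h1 : dist1 d v w = 1) :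
    (w = (v.1, v.2 + 1)) ∨ (w = (v.1, v.2 - 1)) ∨
    (∃ i, w = (Function.update v.1 i (v.1 i + 1), v.2)) ∨
    (∃ i, w = (Function.update v.1 i (v.1 i - 1), v.2)) := by
  unfold dist1 at h1
  set S := ∑ i : Fin d, |v.1 i - w.1 i| with hS
  set b := |v.2 - w.2| with hb
  have hSnn : 0 ≤ S := Finset.sum_nonneg fun i _ => abs_nonneg _
  have hbnn : 0 ≤ b := abs_nonneg _
  have hcases : (b = 1 ∧ S = 0) ∨ (b = 0 ∧ S = 1) := by omega
  rcases hcases with ⟨hb1, hS0⟩ | ⟨hb0, hS1⟩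
  · have hall : ∀ i ∈ Finset.univ, |v.1 i - w.1 i| = 0 :=
      (Finset.sum_eq_zero_iff_of_nonneg (fun i _ => abs_nonneg _)).1 hS0
    have hfst : w.1 = v.1 := by
      funext i
      have := hall i (Finset.mem_univ i)
      have := abs_eq_zero.1 this
      omega
    have : v.2 - w.2 = 1 ∨ v.2 - w.2 = -1 := abs_eq (by norm_num : (0:ℤ) ≤ 1) |>.1 hb1
    rcases this with h2 | h2
    · right; left; exact Prod.ext hfst (by omega)
    · left; exact Prod.ext hfst (by omega)
  · have hsnd : w.2 = v.2 := by
      have := abs_eq_zero.1 hb0; omega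
    obtain ⟨i, hi⟩ : ∃ i, |v.1 i - w.1 i| ≠ 0 := by
      by_contra hc
      push_neg at hc
      have : S = 0 := Finset.sum_eq_zero fun i _ => hc i
      omega
    have hle : |v.1 i - w.1 i| ≤ S := by
      rw [hS]
      exact Finset.single_le_sum (f := fun j => |v.1 j - w.1 j|)
        (fun j _ => abs_nonneg _) (Finset.mem_univ i)
    have hnn := abs_nonneg (v.1 i - w.1 i)
    have hieq : |v.1 i - w.1 i| = 1 := by omega
    have hrest : ∀ j, j ≠ i → w.1 j = v.1 j := by
      intro j hj
      have hsplit : S = |v.1 i - w.1 i| + ∑ k ∈ Finset.univ.erase i, |v.1 k - w.1 k| :=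
        (Finset.add_sum_erase _ _ (Finset.mem_univ i)).symm
      have hz : ∑ k ∈ Finset.univ.erase i, |v.1 k - w.1 k| = 0 := by omega
      have := (Finset.sum_eq_zero_iff_of_nonneg (fun k _ => abs_nonneg _)).1 hz j
        (Finset.mem_erase.2 ⟨hj, Finset.mem_univ j⟩)
      have := abs_eq_zero.1 this; omega
    have : v.1 i - w.1 i = 1 ∨ v.1 i - w.1 i = -1 := (abs_eq (by norm_num : (0:ℤ) ≤ 1)).1 hieq
    rcases this with h2 | h2
    · right; right; right
      refine ⟨i, Prod.ext ?_ hsnd⟩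
      funext j
      by_cases hj : j = i
      · subst hj; simp [Function.update_self]; omega
      · simp [Function.update_of_ne hj, hrest j hj]
    · right; right; left
      refine ⟨i, Prod.ext ?_ hsnd⟩
      funext j
      by_cases hj : j = i
      · subst hj; simp [Function.update_self]; omega
      · simp [Function.update_of_ne hj, hrest j hj]

lemma mem_nbrs_of_edge {d : ℕ} {f : Fin d → ℕ → ℝ≥0∞} {v w : Pt d}
    (he : Edge d f v w) : w ∈ nbrs v := by
  rcases shape_of_dist1 he.2.2 with h | h | ⟨i, h⟩ | ⟨i, h⟩ <;>
      simp only [nbrs, Finset.mem_union, Finset.mem_insert, Finset.mem_singleton,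
        Finset.mem_image, Finset.mem_univ, true_and]
  · exact Or.inl (Or.inl (Or.inl h))
  · exact Or.inl (Or.inl (Or.inr h))
  · exact Or.inl (Or.inr ⟨i, h.symm⟩)
  · exact Or.inr ⟨i, h.symm⟩


section H
variable {d : ℕ} (f : Fin d → ℕ → ℝ≥0∞) (h : Fin d → ℕ → ℕ)
variable (hf : ∀ i, Monotone (f i))
variable (hrec : ∀ (i : Fin d) (n : ℕ),
      ((h i n : ℝ≥0∞) + 1 ≤ f i (n + 1) ∧ h i (n + 1) = h i n + 1) ∨
      (¬ ((h i n : ℝ≥0∞) + 1 ≤ f i (n + 1)) ∧ h i (n + 1) = h i n))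

include hrec in
lemma h_mono (i : Fin d) : Monotone (h i) := by
  apply monotone_nat_of_le_succ
  intro n
  rcases hrec i n with ⟨_, e⟩ | ⟨_, e⟩ <;> omega

include hf hrec in
lemma h_key (i : Fin d) (c m : ℕ) (hcf : (c : ℝ≥0∞) + 1 ≤ f i m) :
    ∀ k, m ≤ k → h i k ≤ c → h i k = h i m + (k - m) := by
  intro k hk
  induction k, hk using Nat.le_induction with
  | base => intro _; simp
  | succ k hmk ih =>
    intro hle
    have hmon : h i k ≤ h i (k+1) := h_mono f h hrec i (Nat.le_succ k)
    have h1 : h i k ≤ c := le_trans hmon hle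
    have hstep : h i (k+1) = h i k + 1 := by
      rcases hrec i k with ⟨_, e⟩ | ⟨hne, _⟩
      · exact e
      · exfalso
        apply hne
        calc (h i k : ℝ≥0∞) + 1 ≤ (c : ℝ≥0∞) + 1 := by
              exact_mod_cast Nat.succ_le_succ h1
          _ ≤ f i m := hcf
          _ ≤ f i (k+1) := hf i (by omega)
    have := ih h1
    omega

/-- The finite box `{v : 0 ≤ vᵢ ≤ hᵢ(n), 0 ≤ v₂ ≤ n}`. -/
noncomputable def Box (n : ℕ) : Finset (Pt d) :=
  (Fintype.piFinset fun i => Finset.Icc (0:ℤ) (h i n)) ×ˢ Finset.Icc (0:ℤ) (n:ℤ)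

lemma mem_Box {n : ℕ} {v : Pt d} :
    v ∈ Box h n ↔ (∀ i, 0 ≤ v.1 i ∧ v.1 i ≤ (h i n : ℤ)) ∧ 0 ≤ v.2 ∧ v.2 ≤ (n : ℤ) := by
  simp [Box, Finset.mem_product, Fintype.mem_piFinset, Finset.mem_Icc, forall_and]

include hf hrec in
lemma cut_struct {n : ℕ} {v w : Pt d} (hv : v ∈ Box h n) (hw : w ∉ Box h n)
    (he : Edge d f v w) :
    (w = (v.1, v.2 + 1) ∧ v.2 = (n : ℤ)) ∨
    (∃ i : Fin d, w = (Function.update v.1 i (v.1 i + 1), v.2) ∧ v.1 i = (h i n : ℤ) ∧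
      h i n = h i v.2.toNat + (n - v.2.toNat) ∧ v.2.toNat ≤ n) := by
  rw [mem_Box] at hv
  obtain ⟨hv1, hv2, hv3⟩ := hv
  have hwV := he.2.1
  obtain ⟨hwa, hwb⟩ := hwV
  rcases shape_of_dist1 he.2.2 with hsh | hsh | ⟨i, hsh⟩ | ⟨i, hsh⟩
  · -- up in time direction
    left
    refine ⟨hsh, ?_⟩
    by_contra hne
    apply hw
    rw [mem_Box, hsh]
    exact ⟨hv1, by omega, by omega⟩
  · exfalso
    apply hw
    rw [mem_Box, hsh]
    have : 0 ≤ v.2 - 1 := by rw [hsh] at hwa; exact hwa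
    exact ⟨hv1, this, by omega⟩
  · -- up in coordinate i
    right
    refine ⟨i, hsh, ?_⟩
    have hvi : v.1 i = (h i n : ℤ) := by
      by_contra hne
      apply hw
      rw [mem_Box, hsh]
      refine ⟨fun j => ?_, hv2, hv3⟩
      by_cases hj : j = i
      · subst hj
        simp only [Function.update_self]
        have := (hv1 j).1
        have := (hv1 j).2
        omega
      · simpa [Function.update_of_ne hj] using hv1 j
    refine ⟨hvi, ?_⟩
    -- the `f` bound from `w ∈ V`
    set m := v.2.toNat with hm
    have hmn : m ≤ n := by omega
    have hwfi := (hwb i).2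
    rw [hsh] at hwfi
    simp only [Function.update_self] at hwfi
    have hcast : ((v.1 i + 1).toNat : ℝ≥0∞) = (h i n : ℝ≥0∞) + 1 := by
      rw [hvi]
      have : ((h i n : ℤ) + 1).toNat = h i n + 1 := by omega
      rw [this]
      push_cast
      ring
    have hm2 : (v.1, v.2).2.toNat = m := rfl
    rw [hm2, hcast] at hwfi
    have hkey := h_key f h hf hrec i (h i n) m hwfi n hmn le_rfl
    exact ⟨hkey, hmn⟩
  · -- down in coordinate i : impossible
    exfalso
    apply hw
    rw [mem_Box, hsh]
    refine ⟨fun j => ?_, hv2, hv3⟩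
    by_cases hj : j = i
    · subst hj
      simp only [Function.update_self]
      have h0 : 0 ≤ w.1 j := (hwb j).1
      rw [hsh] at h0
      simp only [Function.update_self] at h0
      have := (hv1 j).2
      omega
    · simpa [Function.update_of_ne hj] using hv1 j


open Classical in
/-- The edges of the cut at level `n`, carrying nonzero flow. -/
noncomputable def Cut (θ : Pt d → Pt d → ℝ) (n : ℕ) : Finset (Pt d × Pt d) :=
  (Box h n).biUnion fun v =>
    ((nbrs v \ Box h n).filter fun w => θ v w ≠ 0).image fun w => (v, w)

lemma mem_Cut {θ : Pt d → Pt d → ℝ} {n : ℕ} {p : Pt d × Pt d} :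
    p ∈ Cut h θ n ↔ p.1 ∈ Box h n ∧ p.2 ∈ nbrs p.1 ∧ p.2 ∉ Box h n ∧ θ p.1 p.2 ≠ 0 := by
  classical
  obtain ⟨v, w⟩ := p
  simp only [Cut, Finset.mem_biUnion, Finset.mem_image, Finset.mem_filter, Finset.mem_sdiff,
    Prod.mk.injEq]
  constructor
  · rintro ⟨v', hv', w', ⟨⟨hw1, hw2⟩, hw3⟩, rfl, rfl⟩
    exact ⟨hv', hw1, hw2, hw3⟩
  · rintro ⟨h1, h2, h3, h4⟩
    exact ⟨v, h1, w, ⟨⟨h2, h3⟩, h4⟩, rfl, rfl⟩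

lemma sum_Cut (θ : Pt d → Pt d → ℝ) (n : ℕ) :
    ∑ p ∈ Cut h θ n, θ p.1 p.2 = ∑ v ∈ Box h n, ∑ w ∈ nbrs v \ Box h n, θ v w := by
  classical
  rw [Cut, Finset.sum_biUnion]
  · refine Finset.sum_congr rfl fun v _ => ?_
    rw [Finset.sum_image (fun a _ b _ hab => by
      simpa using congrArg Prod.snd hab)]
    exact Finset.sum_filter_ne_zero _
  · intro v1 h1 v2 h2 hne
    simp only [Function.onFun]
    rw [Finset.disjoint_left]
    intro p hp1 hp2
    simp only [Finset.mem_image, Finset.mem_filter] at hp1 hp2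
    obtain ⟨w1, _, rfl⟩ := hp1
    obtain ⟨w2, _, heq⟩ := hp2
    exact hne (by simpa using (congrArg Prod.fst heq).symm)

/-- Decoding map used to bound the size of a cut. -/
def decode (n : ℕ) : Option (Fin d) × (Fin d → ℕ) → Pt d × Pt d
  | (none, a) => (((fun k => (a k : ℤ)), (n : ℤ)), ((fun k => (a k : ℤ)), (n : ℤ) + 1))
  | (some i, a) =>
      ((Function.update (fun k => (a k : ℤ)) i ((h i n : ℤ)), (a i : ℤ) + n - h i n),
       (Function.update (fun k => (a k : ℤ)) i ((h i n : ℤ) + 1), (a i : ℤ) + n - h i n))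

noncomputable def Sn (n : ℕ) : Finset (Pt d × Pt d) :=
  (((Finset.univ : Finset (Option (Fin d))) ×ˢ
    Fintype.piFinset fun j : Fin d => Finset.range (h j n + 1))).image (decode h n)

lemma card_Sn (n : ℕ) : (Sn h n).card ≤ (d+1) * ∏ j, (h j n + 1) := by
  refine le_trans Finset.card_image_le (le_of_eq ?_)
  rw [Finset.card_product, Fintype.card_piFinset]
  simp [Finset.card_range, Nat.add_comm d 1]

include hf hrec in
lemma cut_subset_Sn {θ : Pt d → Pt d → ℝ} (hθ : ∀ v w, ¬ Edge d f v w → θ v w = 0)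
    (n : ℕ) : Cut h θ n ⊆ Sn h n := by
  intro p hp
  rw [mem_Cut] at hp
  obtain ⟨hv, hnb, hw, hne⟩ := hp
  have he : Edge d f p.1 p.2 := by
    by_contra hc; exact hne (hθ _ _ hc)
  obtain ⟨v, w⟩ := p
  dsimp only at hv hnb hw hne he
  have hbox := (mem_Box h).1 hv
  rcases cut_struct f h hf hrec hv hw he with ⟨hsh, hv2⟩ | ⟨i, hsh, hvi, hkey, hmn⟩
  · refine Finset.mem_image.2 ⟨(none, fun k => (v.1 k).toNat), ?_, ?_⟩
    · rw [Finset.mem_product]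
      refine ⟨Finset.mem_univ _, Fintype.mem_piFinset.2 fun k => ?_⟩
      dsimp only
      rw [Finset.mem_range]
      have := (hbox.1 k).1
      have := (hbox.1 k).2
      omega
    · have hv1 : (fun k => (((v.1 k).toNat : ℤ))) = v.1 := by
        funext k
        have := (hbox.1 k).1
        omega
      rw [decode]
      rw [hsh]
      exact Prod.ext (Prod.ext hv1 hv2.symm) (Prod.ext hv1 (by rw [hv2]))
  · set m := v.2.toNat with hmdef
    have hvm : (m : ℤ) = v.2 := Int.toNat_of_nonneg hbox.2.1
    have htime : 0 ≤ v.2 + (h i n : ℤ) - n := by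
      have : (n : ℤ) - m ≤ h i n := by
        have : n - m ≤ h i n := by omega
        omega
      omega
    refine Finset.mem_image.2
      ⟨(some i, Function.update (fun k => (v.1 k).toNat) i (v.2 + (h i n : ℤ) - n).toNat, ), ?_, ?_⟩
    · rw [Finset.mem_product]
      refine ⟨Finset.mem_univ _, Fintype.mem_piFinset.2 fun k => ?_⟩
      dsimp only
      rw [Finset.mem_range]
      by_cases hk : k = i
      · subst hk
        rw [Function.update_self]
        have := hbox.2.2
        omega
      · rw [Function.update_of_ne hk]
        have := (hbox.1 k).1
        have := (hbox.1 k).2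
        omega
    · rw [decode]
      have hai : ((Function.update (fun k => (v.1 k).toNat) i (v.2 + (h i n : ℤ) - n).toNat i : ℕ) : ℤ)
          = v.2 + (h i n : ℤ) - n := by
        rw [Function.update_self]
        exact Int.toNat_of_nonneg htime
      have hbase : ∀ k, k ≠ i →
          ((Function.update (fun k => (v.1 k).toNat) i (v.2 + (h i n : ℤ) - n).toNat k : ℕ) : ℤ)
          = v.1 k := by
        intro k hk
        rw [Function.update_of_ne hk]
        have := (hbox.1 k).1
        simp only [Int.toNat_of_nonneg this]
      have hfst : Function.update
            (fun k => ((Function.update (fun k => (v.1 k).toNat) i (v.2 + (h i n : ℤ) - n).toNat k : ℕ) : ℤ))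
            i ((h i n : ℤ)) = v.1 := by
        funext k
        by_cases hk : k = i
        · subst hk; rw [Function.update_self, hvi]
        · simp only [Function.update_of_ne hk]
          exact Int.toNat_of_nonneg ((hbox.1 k).1)
      have hsnd : Function.update
            (fun k => ((Function.update (fun k => (v.1 k).toNat) i (v.2 + (h i n : ℤ) - n).toNat k : ℕ) : ℤ))
            i ((h i n : ℤ) + 1) = Function.update v.1 i (v.1 i + 1) := by
        funext k
        by_cases hk : k = i
        · subst hk; rw [Function.update_self, Function.update_self, hvi]
        · simp only [Function.update_of_ne hk]
          exact Int.toNat_of_nonneg ((hbox.1 k).1)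
      have htm : ((Function.update (fun k => (v.1 k).toNat) i (v.2 + (h i n : ℤ) - n).toNat i : ℕ) : ℤ) + n - h i n = v.2 := by
        rw [hai]; ring
      rw [hsh]
      exact Prod.ext (Prod.ext hfst htm) (Prod.ext hsnd htm)

include hf hrec in
lemma cut_disjoint {θ : Pt d → Pt d → ℝ} (hθ : ∀ v w, ¬ Edge d f v w → θ v w = 0)
    {n n' : ℕ} (hnn : n ≠ n') : Disjoint (Cut h θ n) (Cut h θ n') := by
  rw [Finset.disjoint_left]
  intro p hp hp'
  rw [mem_Cut] at hp hp'
  have he : Edge d f p.1 p.2 := by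
    by_contra hc; exact hp.2.2.2 (hθ _ _ hc)
  obtain ⟨hpa, hpb, hpc, -⟩ := hp
  obtain ⟨hpa', hpb', hpc', -⟩ := hp'
  obtain ⟨v, w⟩ := p
  dsimp only at hpa hpb hpc hpa' hpb' hpc' he
  rcases cut_struct f h hf hrec hpa hpc he with ⟨hsh, hv2⟩ | ⟨i, hsh, hvi, hkey, hmn⟩ <;>
    rcases cut_struct f h hf hrec hpa' hpc' he with ⟨hsh', hv2'⟩ | ⟨i', hsh', hvi', hkey', hmn'⟩
  · apply hnn
    have : (n : ℤ) = n' := by rw [← hv2, ← hv2']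
    exact_mod_cast this
  · have e1 : w.2 = v.2 + 1 := by rw [hsh]
    have e2 : w.2 = v.2 := by rw [hsh']
    omega
  · have e1 : w.2 = v.2 := by rw [hsh]
    have e2 : w.2 = v.2 + 1 := by rw [hsh']
    omega
  · have hii : i = i' := by
      by_contra hc
      have h1 : w.1 i = v.1 i + 1 := by rw [hsh]; simp [Function.update_self]
      have h2 : w.1 i = v.1 i := by rw [hsh']; simp [Function.update_of_ne hc]
      omega
    subst hii
    have hh : h i n = h i n' := by
      have : (h i n : ℤ) = h i n' := by rw [← hvi, ← hvi']
      exact_mod_cast this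
    apply hnn
    omega

end H


/-- Lemma 3.1, flow/Thomson form: every unit flow θ from O to ∂_r has
energy E(θ) ≥ (1/(2(d+1)²)) ∑_{n<r} ∏ᵢ 1/(hᵢ(n)+1). -/
theorem stmt_8
    (d : ℕ) (hd : 1 ≤ d) (f : Fin d → ℕ → ℝ≥0∞) (hf : ∀ i, Monotone (f i))
    (h : Fin d → ℕ → ℕ) (h0 : ∀ i, h i 0 = 0)
    (hrec : ∀ (i : Fin d) (n : ℕ),
      ((h i n : ℝ≥0∞) + 1 ≤ f i (n + 1) ∧ h i (n + 1) = h i n + 1) ∨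
      (¬ ((h i n : ℝ≥0∞) + 1 ≤ f i (n + 1)) ∧ h i (n + 1) = h i n)) :
    ∀ r : ℕ, 1 ≤ r → ∀ θ : Pt d → Pt d → ℝ,
      IsUnitFlow d f (0 : Pt d) {z | z ∈ V d f ∧ ufun d h z = r} θ →
      ENNReal.ofReal ((1 / (2 * ((d : ℝ) + 1) ^ 2)) *
          ∑ n ∈ Finset.range r, ∏ i : Fin d, (1 / ((h i n : ℝ) + 1)))
        ≤ energy d θ := by
  intro r hr θ hθ
  classical
  obtain ⟨⟨hanti, hzero⟩, hdivO, hdivv⟩ := hθ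
  have hdiv_fin : ∀ v : Pt d, divg d θ v = ∑ w ∈ nbrs v, θ v w := fun v =>
    tsum_eq_sum fun w hw => hzero v w fun he => hw (mem_nbrs_of_edge he)
  -- the cut identity
  have hcut1 : ∀ n, n < r → ∑ p ∈ Cut h θ n, θ p.1 p.2 = 1 := by
    intro n hn
    have hOmem : (0 : Pt d) ∈ Box h n := by
      rw [mem_Box]
      refine ⟨fun i => ⟨le_refl 0, ?_⟩, le_refl 0, ?_⟩
      · simp
      · simp
    have hbox_div : ∑ v ∈ Box h n, divg d θ v = 1 := by
      rw [Finset.sum_eq_single_of_mem (0 : Pt d) hOmem]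
      · exact hdivO
      · intro v hv hvne
        apply hdivv
        intro hmem
        have hu : ufun d h v ≤ n := by
          rw [ufun]
          apply max_le
          · have := ((mem_Box h).1 hv).2
            omega
          · refine Finset.sup_le fun i _ => Nat.sInf_le ?_
            exact (((mem_Box h).1 hv).1 i).2
        rcases hmem with hmem | hmem
        · have := hmem.2
          omega
        · exact hvne hmem
    have hInner : ∑ v ∈ Box h n, ∑ w ∈ nbrs v ∩ Box h n, θ v w = 0 := by
      have hext : ∀ v ∈ Box h n, ∑ w ∈ nbrs v ∩ Box h n, θ v w = ∑ w ∈ Box h n, θ v w := by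
        intro v _
        apply Finset.sum_subset Finset.inter_subset_right
        intro w hwB hwn
        apply hzero
        intro he
        exact hwn (Finset.mem_inter.2 ⟨mem_nbrs_of_edge he, hwB⟩)
      rw [Finset.sum_congr rfl hext]
      have h1 : ∑ v ∈ Box h n, ∑ w ∈ Box h n, θ v w
          = ∑ v ∈ Box h n, ∑ w ∈ Box h n, (- θ w v) :=
        Finset.sum_congr rfl fun v _ => Finset.sum_congr rfl fun w _ => hanti v w
      have h2 : ∑ v ∈ Box h n, ∑ w ∈ Box h n, (- θ w v)
          = - ∑ v ∈ Box h n, ∑ w ∈ Box h n, θ w v := by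
        simp
      have h3 : ∑ v ∈ Box h n, ∑ w ∈ Box h n, θ w v
          = ∑ w ∈ Box h n, ∑ v ∈ Box h n, θ w v := Finset.sum_comm
      linarith [h1, h2, h3]
    calc ∑ p ∈ Cut h θ n, θ p.1 p.2
        = ∑ v ∈ Box h n, ∑ w ∈ nbrs v \ Box h n, θ v w := sum_Cut h θ n
      _ = ∑ v ∈ Box h n, (∑ w ∈ nbrs v ∩ Box h n, θ v w + ∑ w ∈ nbrs v \ Box h n, θ v w)
            - ∑ v ∈ Box h n, ∑ w ∈ nbrs v ∩ Box h n, θ v w := by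
          rw [Finset.sum_add_distrib]; ring
      _ = ∑ v ∈ Box h n, divg d θ v - 0 := by
          rw [hInner]
          congr 1
          refine Finset.sum_congr rfl fun v _ => ?_
          rw [hdiv_fin v, Finset.sum_inter_add_sum_sdiff]
      _ = 1 := by rw [hbox_div]; ring
  -- cardinality bound
  have hcard : ∀ n, (Cut h θ n).card ≤ (d+1) * ∏ j, (h j n + 1) := fun n =>
    le_trans (Finset.card_le_card (cut_subset_Sn f h hf hrec hzero n)) (card_Sn h n)
  set N : ℕ → ℕ := fun n => (d+1) * ∏ j, (h j n + 1) with hN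
  have hNpos : ∀ n, 0 < (N n : ℝ) := by
    intro n
    have : 0 < N n := by
      apply Nat.mul_pos (by omega)
      exact Finset.prod_pos fun j _ => by omega
    exact_mod_cast this
  set t : ℕ → ℝ := fun n => ∑ p ∈ Cut h θ n, θ p.1 p.2 ^ 2 with ht
  have htnn : ∀ n, 0 ≤ t n := fun n => Finset.sum_nonneg fun p _ => sq_nonneg _
  have hCS : ∀ n, n < r → 1 / (N n : ℝ) ≤ t n := by
    intro n hn
    have h1 : (∑ p ∈ Cut h θ n, (1:ℝ) * θ p.1 p.2)^2
        ≤ (∑ p ∈ Cut h θ n, (1:ℝ)^2) * ∑ p ∈ Cut h θ n, θ p.1 p.2^2 :=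
      Finset.sum_mul_sq_le_sq_mul_sq _ _ _
    simp only [one_mul, one_pow, Finset.sum_const, nsmul_eq_mul, mul_one] at h1
    rw [hcut1 n hn, one_pow] at h1
    have h2 : ((Cut h θ n).card : ℝ) ≤ (N n : ℝ) := by exact_mod_cast hcard n
    have h3 : (1:ℝ) ≤ (N n : ℝ) * t n := by
      calc (1:ℝ) ≤ ((Cut h θ n).card : ℝ) * t n := h1
        _ ≤ (N n : ℝ) * t n := mul_le_mul_of_nonneg_right h2 (htnn n)
    rw [div_le_iff₀ (hNpos n)]
    linarith [h3]
  -- energy lower bound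
  have hhalf : ENNReal.ofReal (2⁻¹ : ℝ) = (2⁻¹ : ℝ≥0∞) := by
    rw [ENNReal.ofReal_inv_of_pos two_pos, ENNReal.ofReal_ofNat]
  have hpd : (↑(Finset.range r) : Set ℕ).PairwiseDisjoint (Cut h θ) := by
    intro a _ b _ hab
    exact cut_disjoint f h hf hrec hzero hab
  have hE : ∑ n ∈ Finset.range r, ENNReal.ofReal (2⁻¹ * (1 / (N n : ℝ))) ≤ energy d θ := by
    have step1 : ∀ n ∈ Finset.range r,
        ENNReal.ofReal (2⁻¹ * (1 / (N n : ℝ)))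
          ≤ (2⁻¹ : ℝ≥0∞) * ∑ p ∈ Cut h θ n, ENNReal.ofReal (θ p.1 p.2 ^ 2) := by
      intro n hn
      rw [Finset.mem_range] at hn
      calc ENNReal.ofReal (2⁻¹ * (1 / (N n : ℝ)))
          ≤ ENNReal.ofReal (2⁻¹ * t n) := by
            apply ENNReal.ofReal_le_ofReal
            have := hCS n hn
            nlinarith [hNpos n]
        _ = ENNReal.ofReal (2⁻¹:ℝ) * ENNReal.ofReal (t n) := by
            rw [ENNReal.ofReal_mul (by norm_num)]
        _ = (2⁻¹ : ℝ≥0∞) * ∑ p ∈ Cut h θ n, ENNReal.ofReal (θ p.1 p.2 ^ 2) := by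
            rw [hhalf, ht]
            congr 1
            exact ENNReal.ofReal_sum_of_nonneg fun p _ => sq_nonneg _
    calc ∑ n ∈ Finset.range r, ENNReal.ofReal (2⁻¹ * (1 / (N n : ℝ)))
        ≤ ∑ n ∈ Finset.range r, (2⁻¹ : ℝ≥0∞) * ∑ p ∈ Cut h θ n, ENNReal.ofReal (θ p.1 p.2 ^ 2) :=
          Finset.sum_le_sum step1
      _ = (2⁻¹ : ℝ≥0∞) * ∑ n ∈ Finset.range r, ∑ p ∈ Cut h θ n, ENNReal.ofReal (θ p.1 p.2 ^ 2) := by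
          rw [Finset.mul_sum]
      _ = (2⁻¹ : ℝ≥0∞) * ∑ p ∈ (Finset.range r).biUnion (Cut h θ), ENNReal.ofReal (θ p.1 p.2 ^ 2) := by
          rw [Finset.sum_biUnion hpd]
      _ ≤ (2⁻¹ : ℝ≥0∞) * ∑' q : Pt d × Pt d, ENNReal.ofReal (θ q.1 q.2 ^ 2) := by
          gcongr
          exact ENNReal.sum_le_tsum _
      _ = energy d θ := by rw [energy, one_div]
  -- final real arithmetic
  refine le_trans ?_ hE
  rw [← ENNReal.ofReal_sum_of_nonneg (fun n _ => by positivity)]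
  apply ENNReal.ofReal_le_ofReal
  rw [Finset.mul_sum]
  refine Finset.sum_le_sum fun n _ => ?_
  have hP : (0:ℝ) < ∏ j, ((h j n : ℝ) + 1) := Finset.prod_pos fun j _ => by positivity
  have hNn : (N n : ℝ) = ((d:ℝ)+1) * ∏ j, ((h j n : ℝ) + 1) := by
    rw [hN]
    push_cast
    ring
  have hprod : (∏ i : Fin d, (1 / ((h i n : ℝ) + 1))) = 1 / ∏ j, ((h j n : ℝ) + 1) := by
    rw [one_div, ← Finset.prod_inv_distrib]
    simp [one_div]
  rw [hprod, hNn]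
  rw [div_mul_div_comm, one_mul, inv_eq_one_div, div_mul_div_comm, one_mul]
  apply one_div_le_one_div_of_le (by positivity)
  have h2 : ((d:ℝ)+1) ≤ ((d:ℝ)+1)^2 := by nlinarith [Nat.cast_nonneg (α := ℝ) d]
  nlinarith [hP, h2]




end WedgePaper
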